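/- arXiv:2602.15164 — 2 statements merged into one kernel-verified Lean document; each statement's English description precedes it below -/
import Mathlib

section
/- For queries in the grammar Q ::= φ_{??i} | φ | Q ∧ Q | Q ; Q with quantitative semantics ⟨Q⟩_{v,u}(z) defined by: ⟨φ_{??i}⟩_{v,u}(z) = (ι_φ(z) - v_i)/u_i; ⟨φ⟩_{v,u}(z) = +∞ if sat_φ(z) = 1 and -∞ otherwise; ⟨Q1 ∧ Q2⟩_{v,u}(z) = min(⟨Q1⟩_{v,u}(z), ⟨Q2⟩_{v,u}(z)); and ⟨Q1 ; Q2⟩_{v,u}(z) = max over 0 ≤ k ≤ n of min(⟨Q1⟩_{v,u}(z_{0:k}), ⟨Q2⟩_{v,u}(z_{k:n})) — the value t* = ⟨Q⟩_{v,u}(z) is a boundary value of the antitone function t ↦ ⟦Q_{t·u + v}⟧(z), i.e., ⟦Q_{t'·u+v}⟧(z) = 0 for all t' > t*, and either t* = -∞ or ⟦Q_{t*·u+v}⟧(z) = 1. -/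
/-- Queries: parameterized predicates, parameterless predicates, conjunction, sequencing. -/
inductive Query (X : Type) (d : ℕ) where
  | pred (i : Fin d) (ι : List X → ℝ)
  | pred0 (sat : List X → Bool)
  | and (q1 q2 : Query X d)
  | seq (q1 q2 : Query X d)

/-- Satisfaction semantics `⟦Q_θ⟧(z)`. -/
noncomputable def Query.sem {X : Type} {d : ℕ} : Query X d → (Fin d → ℝ) → List X → Bool
  | .pred i ι, θ, z => decide (θ i ≤ ι z)
  | .pred0 s, _, z => s z
  | .and q1 q2, θ, z => q1.sem θ z && q2.sem θ z
  | .seq q1 q2, θ, z =>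
      (List.range (z.length + 1)).any fun k => q1.sem θ (z.take k) && q2.sem θ (z.drop k)

/-- Quantitative semantics `⟨Q⟩_{v,u}(z) ∈ ℝ̄`. -/
noncomputable def Query.quant {X : Type} {d : ℕ} :
    Query X d → (Fin d → ℝ) → (Fin d → ℝ) → List X → EReal
  | .pred i ι, v, u, z => (((ι z - v i) / u i : ℝ) : EReal)
  | .pred0 s, _, _, z => if s z then ⊤ else ⊥
  | .and q1 q2, v, u, z => min (q1.quant v u z) (q2.quant v u z)
  | .seq q1 q2, v, u, z =>
      (Finset.range (z.length + 1)).sup fun k =>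
        min (q1.quant v u (z.take k)) (q2.quant v u (z.drop k))

private lemma coe_not_le_bot (t : ℝ) : ¬ ((t : EReal) ≤ ⊥) := by
  simp

/-- The quantitative semantics computes a boundary value of `t ↦ ⟦Q_{t·u+v}⟧(z)`. -/
theorem quant_is_boundary {X : Type} {d : ℕ} (Q : Query X d)
    (v u : Fin d → ℝ) (hu : ∀ i, 0 < u i) (z : List X) :
    (∀ t' : ℝ, Q.quant v u z < (t' : EReal) →
        Q.sem (fun i => t' * u i + v i) z = false) ∧
    (Q.quant v u z = ⊥ ∨
      ∀ t : ℝ, (t : EReal) ≤ Q.quant v u z → Q.sem (fun i => t * u i + v i) z = true) := by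
  induction Q generalizing z with
  | pred i ι =>
    constructor
    · intro t' h
      simp only [Query.quant, EReal.coe_lt_coe_iff, div_lt_iff₀ (hu i)] at h
      simp only [Query.sem, decide_eq_false_iff_not, not_le]
      linarith
    · right
      intro t h
      simp only [Query.quant, EReal.coe_le_coe_iff, le_div_iff₀ (hu i)] at h
      simp only [Query.sem, decide_eq_true_eq]
      linarith
  | pred0 s =>
    by_cases hs : s z = true
    · refine ⟨?_, Or.inr ?_⟩
      · intro t' h
        simp [Query.quant, hs] at h
      · intro t _
        simpa [Query.sem] using hs
    · refine ⟨?_, Or.inl ?_⟩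
      · intro t' _
        simpa [Query.sem] using hs
      · simp [Query.quant, hs]
  | and q1 q2 ih1 ih2 =>
    constructor
    · intro t' h
      simp only [Query.quant, min_lt_iff] at h
      simp only [Query.sem, Bool.and_eq_false_iff]
      rcases h with h | h
      · exact Or.inl ((ih1 z).1 t' h)
      · exact Or.inr ((ih2 z).1 t' h)
    · right
      intro t h
      simp only [Query.quant, le_min_iff] at h
      simp only [Query.sem, Bool.and_eq_true]
      constructor
      · rcases (ih1 z).2 with hb | hq
        · exact absurd (hb ▸ h.1) (coe_not_le_bot t)
        · exact hq t h.1
      · rcases (ih2 z).2 with hb | hq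
        · exact absurd (hb ▸ h.2) (coe_not_le_bot t)
        · exact hq t h.2
  | seq q1 q2 ih1 ih2 =>
    constructor
    · intro t' h
      simp only [Query.quant, Finset.sup_lt_iff (show (⊥ : EReal) < (t' : EReal) by simp)] at h
      simp only [Query.sem, List.any_eq_false]
      intro k hk
      have hk' : k ∈ Finset.range (z.length + 1) := by
        simpa using List.mem_range.mp hk
      have := h k hk'
      rw [min_lt_iff] at this
      rcases this with h1 | h1
      · simp [(ih1 _).1 t' h1]
      · simp [(ih2 _).1 t' h1]
    · right
      intro t h
      obtain ⟨k, hk, hek⟩ :=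
        Finset.exists_mem_eq_sup (Finset.range (z.length + 1)) (by simp)
          (fun k => min (q1.quant v u (z.take k)) (q2.quant v u (z.drop k)))
      rw [Query.quant, hek, le_min_iff] at h
      simp only [Query.sem, List.any_eq_true]
      refine ⟨k, List.mem_range.mpr (Finset.mem_range.mp hk), ?_⟩
      rw [Bool.and_eq_true]
      constructor
      · rcases (ih1 (z.take k)).2 with hb | hq
        · exact absurd (hb ▸ h.1) (coe_not_le_bot t)
        · exact hq t h.1
      · rcases (ih2 (z.drop k)).2 with hb | hq
        · exact absurd (hb ▸ h.2) (coe_not_le_bot t)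
        · exact hq t h.2
end

section
/- For any query Q, parameter v ∈ ℝ^d, positive vector u ∈ ℝ_{>0}^d, trajectory z of length n, and indices 0 ≤ i ≤ j ≤ n, the (i,j) entry of the matrix semantics equals the quantitative semantics on the corresponding subtrajectory: (⟪Q⟫_{v,u}(z))_{i,j} = ⟨Q⟩_{v,u}(z_{i:j}). In particular ⟨Q⟩_{v,u}(z) = (⟪Q⟫_{v,u}(z))_{0,n}. -/
/-- Matrix semantics `⟪Q⟫_{v,u}(z)`, an `(n+1)×(n+1)` matrix over ℝ̄. -/
noncomputable def Query.matSem {X : Type} {d : ℕ} :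
    Query X d → (Fin d → ℝ) → (Fin d → ℝ) → (z : List X) →
      Fin (z.length + 1) → Fin (z.length + 1) → EReal
  | .pred i ι, v, u, z => fun a b =>
      if (a : ℕ) ≤ b then (((ι ((z.drop a).take ((b : ℕ) - a)) - v i) / u i : ℝ) : EReal)
      else ⊥
  | .pred0 s, _, _, z => fun a b =>
      if (a : ℕ) ≤ b then (if s ((z.drop a).take ((b : ℕ) - a)) then ⊤ else ⊥) else ⊥
  | .and q1 q2, v, u, z => fun a b => min (q1.matSem v u z a b) (q2.matSem v u z a b)
  | .seq q1 q2, v, u, z => fun a b =>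
      Finset.univ.sup fun k => min (q1.matSem v u z a k) (q2.matSem v u z k b)

theorem Query.matSem_bot {X : Type} {d : ℕ} (Q : Query X d) (v u : Fin d → ℝ)
    (z : List X) : ∀ i j : Fin (z.length + 1), (j : ℕ) < i → Q.matSem v u z i j = ⊥ := by
  induction Q with
  | pred i ι => intro a b h; simp [Query.matSem, Nat.not_le.mpr h]
  | pred0 s => intro a b h; simp [Query.matSem, Nat.not_le.mpr h]
  | and q1 q2 ih1 ih2 => intro a b h; simp [Query.matSem, ih1 a b h, ih2 a b h]
  | seq q1 q2 ih1 ih2 =>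
      intro a b h
      simp only [Query.matSem]
      rw [Finset.sup_eq_bot_iff]
      intro k _
      rcases le_or_gt (a : ℕ) (k : ℕ) with hk | hk
      · rw [ih2 k b (lt_of_lt_of_le h hk)]; simp
      · rw [ih1 a k hk]; simp

/-- Each entry of the matrix semantics is the quantitative semantics of the
corresponding subtrajectory; in particular `⟨Q⟩_{v,u}(z) = (⟪Q⟫_{v,u}(z))_{0,n}`. -/
theorem matSem_eq_quant {X : Type} {d : ℕ} (Q : Query X d)
    (v u : Fin d → ℝ) (hu : ∀ i, 0 < u i) (z : List X) :
    (∀ i j : Fin (z.length + 1), (i : ℕ) ≤ j →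
      Q.matSem v u z i j = Q.quant v u ((z.drop i).take ((j : ℕ) - i))) ∧
    Q.quant v u z = Q.matSem v u z 0 (Fin.last z.length) := by
  have aux : ∀ i j : Fin (z.length + 1), (i : ℕ) ≤ j →
      Q.matSem v u z i j = Q.quant v u ((z.drop i).take ((j : ℕ) - i)) := by
    induction Q with
    | pred i ι => intro a b h; simp [Query.matSem, Query.quant, h]
    | pred0 s => intro a b h; simp [Query.matSem, Query.quant, h]
    | and q1 q2 ih1 ih2 =>
        intro a b h; simp [Query.matSem, Query.quant, ih1 a b h, ih2 a b h]
    | seq q1 q2 ih1 ih2 =>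
        intro a b h
        have hb : (b : ℕ) ≤ z.length := Nat.lt_succ_iff.mp b.isLt
        set w := (z.drop a).take ((b : ℕ) - a) with hwdef
        have hw : w.length = (b : ℕ) - a := by
          simp only [hwdef, List.length_take, List.length_drop]
          omega
        have key : ∀ k : Fin (z.length + 1), (a : ℕ) ≤ k → (k : ℕ) ≤ b →
            min (q1.matSem v u z a k) (q2.matSem v u z k b) =
            min (q1.quant v u (w.take ((k : ℕ) - a)))
                (q2.quant v u (w.drop ((k : ℕ) - a))) := by
          intro k hak hkb
          have e1 : w.take ((k : ℕ) - a) = (z.drop a).take ((k : ℕ) - a) := by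
            rw [hwdef, List.take_take]
            congr 1
            omega
          have e2 : w.drop ((k : ℕ) - a) = (z.drop k).take ((b : ℕ) - k) := by
            rw [hwdef, List.drop_take, List.drop_drop, Nat.add_sub_cancel' hak]
            congr 1
            omega
          rw [ih1 a k hak, ih2 k b hkb, e1, e2]
        simp only [Query.matSem, Query.quant, hw]
        apply le_antisymm
        · apply Finset.sup_le
          intro k _
          rcases le_or_gt (a : ℕ) (k : ℕ) with hak | hak
          · rcases le_or_gt (k : ℕ) (b : ℕ) with hkb | hkb
            · rw [key k hak hkb]
              exact Finset.le_sup
                (f := fun m => q1.quant v u (List.take m w) ⊓ q2.quant v u (List.drop m w))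
                (Finset.mem_range.mpr (by omega))
            · rw [q2.matSem_bot v u z k b hkb]; simp
          · rw [q1.matSem_bot v u z a k hak]; simp
        · apply Finset.sup_le
          intro m hm
          have hm' : m ≤ (b : ℕ) - (a : ℕ) := Nat.lt_succ_iff.mp (Finset.mem_range.mp hm)
          refine le_trans ?_ (Finset.le_sup (Finset.mem_univ (⟨a + m, by omega⟩ :
            Fin (z.length + 1))))
          rw [key ⟨a + m, by omega⟩ (by simp) (by simp; omega)]
          simp
  refine ⟨aux, ?_⟩
  have h := aux 0 (Fin.last z.length) (by simp)
  simp only [Fin.val_last, Fin.val_zero, Nat.sub_zero, List.drop_zero,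
    List.take_length] at h
  exact h.symm
end
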